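/- Let q₁ = [A₁,B₁,C₁] and q₂ = [A₂,B₂,C₂] be PIBQFs with discriminants D₁, D₂ satisfying B_Δ(q₁,q₂)² < D₁D₂. Then (B₁A₂ − B₂A₁)·q₁(q_{2,f}, 1) > 0, where q₁(q_{2,f},1) = A₁q_{2,f}² + B₁q_{2,f} + C₁; that is, the sign of the intersection equals the sign of the value of q₁ at the first root of q₂. -/
import Mathlib


/-- A binary quadratic form `[A,B,C]`, encoded as a triple of integers. -/
abbrev BQF := ℤ × ℤ × ℤ

/-- The discriminant `B² - 4AC` of a binary quadratic form `[A,B,C]`. -/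
def disc (q : BQF) : ℤ := q.2.1 ^ 2 - 4 * q.1 * q.2.2

/-- A binary quadratic form is primitive if `gcd(A,B,C) = 1`. -/
def IsPrimitiveBQF (q : BQF) : Prop := Int.gcd q.1 (Int.gcd q.2.1 q.2.2) = 1

/-- A primitive indefinite binary quadratic form: primitive, of positive
nonsquare discriminant. -/
def IsPIBQF (q : BQF) : Prop := IsPrimitiveBQF q ∧ 0 < disc q ∧ ¬ IsSquare (disc q)

abbrev SL2Z := Matrix.SpecialLinearGroup (Fin 2) ℤ

/-- The action of `SL(2,ℤ)` on binary quadratic forms: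
`(γ ∘ q)(x,y) = q(ax + by, cx + dy)`. -/
def actForm (γ : SL2Z) (q : BQF) : BQF :=
  ((q.1 * (γ.1 0 0)^2 + q.2.1 * (γ.1 0 0) * (γ.1 1 0) + q.2.2 * (γ.1 1 0)^2),
   (2 * q.1 * (γ.1 0 0) * (γ.1 0 1) + q.2.1 * ((γ.1 0 0) * (γ.1 1 1) + (γ.1 0 1) * (γ.1 1 0))
      + 2 * q.2.2 * (γ.1 1 0) * (γ.1 1 1)),
   (q.1 * (γ.1 0 1)^2 + q.2.1 * (γ.1 0 1) * (γ.1 1 1) + q.2.2 * (γ.1 1 1)^2))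

/-- Equivalence of binary quadratic forms under `SL(2,ℤ)`. -/
def equivF (q q' : BQF) : Prop := ∃ γ : SL2Z, actForm γ q = q'

/-- `B_Δ(q₁,q₂) = B₁B₂ - 2A₁C₂ - 2A₂C₁`. -/
def BΔ (q₁ q₂ : BQF) : ℤ := q₁.2.1 * q₂.2.1 - 2 * q₁.1 * q₂.2.2 - 2 * q₂.1 * q₁.2.2

/-- A fundamental discriminant. -/
def IsFundamentalDisc (D : ℤ) : Prop :=
  (D % 4 = 1 ∧ Squarefree D) ∨
    (∃ m : ℤ, D = 4 * m ∧ Squarefree m ∧ (m % 4 = 2 ∨ m % 4 = 3))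

/-- The Kronecker symbol `(a / p)` for a prime `p`. -/
def kron (a : ℤ) (p : ℕ) : ℤ :=
  if p = 2 then (if a % 2 = 0 then 0 else if a % 8 = 1 ∨ a % 8 = 7 then 1 else -1)
  else jacobiSym a p

/-- `ε(p)`: the nonzero value among the Kronecker symbols `(D₁/p)`, `(D₂/p)`. -/
def epsP (D₁ D₂ : ℤ) (p : ℕ) : ℤ := if kron D₁ p = 0 then kron D₂ p else kron D₁ p

/-- The multiplicative extension of `ε` to positive integers. -/
def epsMul (D₁ D₂ : ℤ) (d : ℕ) : ℤ :=
  d.factorization.prod fun p k => (epsP D₁ D₂ p) ^ k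

/-- Pairs of primitive forms of discriminants `D₁, D₂` with `B_Δ = n`. -/
def PairSet (D₁ D₂ n : ℤ) : Type :=
  {p : BQF × BQF // IsPrimitiveBQF p.1 ∧ IsPrimitiveBQF p.2 ∧
    disc p.1 = D₁ ∧ disc p.2 = D₂ ∧ BΔ p.1 p.2 = n}

/-- Simultaneous `SL(2,ℤ)`-equivalence of pairs. -/
def pairRel (D₁ D₂ n : ℤ) (x y : PairSet D₁ D₂ n) : Prop :=
  ∃ γ : SL2Z, actForm γ x.1.1 = y.1.1 ∧ actForm γ x.1.2 = y.1.2

/-- `p(n)`: the number of simultaneous equivalence classes of pairs of primitive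
forms of discriminants `D₁, D₂` with `B_Δ = n`. -/
noncomputable def pCount (D₁ D₂ n : ℤ) : ℕ := Nat.card (Quot (pairRel D₁ D₂ n))

/-- The root geodesic of an indefinite form, as a subset of the upper half plane. -/
def rootGeodesic (q : BQF) : Set ℂ :=
  {z : ℂ | 0 < z.im ∧
    (q.1 : ℝ) * Complex.normSq z + (q.2.1 : ℝ) * z.re + (q.2.2 : ℝ) = 0}

/-- The first root `(-B + √D)/(2A)` of a PIBQF. -/
noncomputable def firstRoot (q : BQF) : ℝ :=
  (-(q.2.1 : ℝ) + Real.sqrt (disc q)) / (2 * q.1)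

/-- The second root `(-B - √D)/(2A)` of a PIBQF. -/
noncomputable def secondRoot (q : BQF) : ℝ :=
  (-(q.2.1 : ℝ) - Real.sqrt (disc q)) / (2 * q.1)


/-- Remark 7 of the paper.
If the root geodesics of `q₁, q₂` intersect, the sign of the intersection
`sign(B₁A₂ - B₂A₁)` equals the sign of `q₁(q_{2,f}, 1)`. -/
theorem sign_eq_sign_of_value_at_first_root
    (q₁ q₂ : BQF) (h₁ : IsPIBQF q₁) (h₂ : IsPIBQF q₂)
    (h : (BΔ q₁ q₂) ^ 2 < disc q₁ * disc q₂) :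
    0 < ((q₁.2.1 * q₂.1 - q₂.2.1 * q₁.1 : ℤ) : ℝ) *
      ((q₁.1 : ℝ) * (firstRoot q₂) ^ 2 + (q₁.2.1 : ℝ) * firstRoot q₂ + (q₁.2.2 : ℝ)) := by
  obtain ⟨-, hD2pos, hD2ns⟩ := h₂
  obtain ⟨a1, b1, c1⟩ := q₁
  obtain ⟨a2, b2, c2⟩ := q₂
  simp only [disc, BΔ] at *
  have hA2 : a2 ≠ 0 := by
    intro h0
    exact hD2ns ⟨b2, by subst h0; simp; ring⟩
  have hA2R : (a2 : ℝ) ≠ 0 := Int.cast_ne_zero.2 hA2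
  set s : ℝ := Real.sqrt ((b2 ^ 2 - 4 * a2 * c2 : ℤ) : ℝ) with hsdef
  have hD2R : (0:ℝ) < ((b2 ^ 2 - 4 * a2 * c2 : ℤ) : ℝ) := by exact_mod_cast hD2pos
  have hs2 : s ^ 2 = (b2:ℝ) ^ 2 - 4 * a2 * c2 := by
    rw [hsdef, Real.sq_sqrt hD2R.le]; push_cast; ring
  have hspos : 0 < s := Real.sqrt_pos.2 hD2R
  have hkey : ((b1 * b2 - 2 * a1 * c2 - 2 * a2 * c1 : ℝ)) ^ 2
      < ((b1:ℝ) ^ 2 - 4 * a1 * c1) * ((b2:ℝ) ^ 2 - 4 * a2 * c2) := by exact_mod_cast h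
  set r : ℝ := firstRoot (a2, b2, c2) with hrdef
  have hrr : 2 * (a2:ℝ) * r = -(b2:ℝ) + s := by
    rw [hrdef]
    show 2 * (a2:ℝ) * ((-(b2:ℝ) + s) / (2 * a2)) = -(b2:ℝ) + s
    field_simp
  set Δ : ℝ := (b1:ℝ) * a2 - (b2:ℝ) * a1 with hΔ
  set E : ℝ := (a1:ℝ) * ((b2:ℝ)^2 - 4*a2*c2) - (a2:ℝ) * ((b1:ℝ)*b2 - 2*a1*c2 - 2*a2*c1)
    with hE
  have hmul : 4 * (a2:ℝ)^2 * ((a1:ℝ) * r^2 + (b1:ℝ) * r + (c1:ℝ)) = 2*E + 2*Δ*s := by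
    rw [hE, hΔ]
    linear_combination ((a1:ℝ)*(2*a2*r - b2 + s) + 2*b1*a2) * hrr + (a1:ℝ) * hs2
  have ha2sq : 0 < (a2 : ℝ) ^ 2 :=
    lt_of_le_of_ne (sq_nonneg _) (Ne.symm (pow_ne_zero 2 hA2R))
  have hident : Δ ^ 2 * ((b2:ℝ)^2 - 4*a2*c2) - E ^ 2
      = (a2:ℝ) ^ 2 * (((b1:ℝ)^2 - 4*a1*c1) * ((b2:ℝ)^2 - 4*a2*c2)
          - ((b1:ℝ)*b2 - 2*a1*c2 - 2*a2*c1) ^ 2) := by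
    rw [hΔ, hE]; ring
  have hpos' : 0 < Δ * (2*E + 2*Δ*s) := by
    nlinarith [mul_pos ha2sq (sub_pos.mpr hkey), sq_nonneg (Δ * s + E), hspos, hs2, hident]
  have hfin : 0 < (4 * (a2:ℝ)^2) *
      (Δ * ((a1:ℝ) * r^2 + (b1:ℝ) * r + (c1:ℝ))) := by
    calc (0:ℝ) < Δ * (2*E + 2*Δ*s) := hpos'
    _ = (4 * (a2:ℝ)^2) * (Δ * ((a1:ℝ) * r^2 + (b1:ℝ) * r + (c1:ℝ))) := by
        rw [← hmul]; ring
  have hgoal : 0 < Δ * ((a1:ℝ) * r^2 + (b1:ℝ) * r + (c1:ℝ)) := by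
    nlinarith [hfin, ha2sq]
  push_cast
  exact hgoal
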